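/- For all integers K ≥ 1, T ≥ 1 and m ≥ 1, the optimal bookmaking loss is subadditive under horizon repetition: V (m·T) 0 ≤ m · (V T 0). -/

import Mathlib

open scoped BigOperators

noncomputable section

def simplex (K : ℕ) : Set (Fin K → ℝ) :=
  {q | (∀ k, 0 ≤ q k) ∧ ∑ k, q k = 1}

def simplexInt (K : ℕ) : Set (Fin K → ℝ) :=
  {r | (∀ k, 0 < r k) ∧ ∑ k, r k = 1}

noncomputable def V (K : ℕ) : ℕ → (Fin K → ℝ) → ℝ
  | 0, s => ⨆ k, s k
  | H + 1, s =>
      sInf ((fun r : Fin K → ℝ =>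
        sSup ((fun q : Fin K → ℝ => V K H (fun k => s k + q k / r k)) '' simplex K))
        '' simplexInt K)

lemma uniform_mem_simplexInt {K : ℕ} (hK : 1 ≤ K) :
    (fun _ : Fin K => (K : ℝ)⁻¹) ∈ simplexInt K := by
  have hK0 : (0:ℝ) < K := by exact_mod_cast hK
  constructor
  · intro k; positivity
  · simp only [Finset.sum_const, Finset.card_univ, Fintype.card_fin, nsmul_eq_mul]
    field_simp

lemma simplexInt_subset {K : ℕ} : simplexInt K ⊆ simplex K := by
  rintro r ⟨h1, h2⟩
  exact ⟨fun k => (h1 k).le, h2⟩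

lemma mem_simplex_le_one {K : ℕ} {q : Fin K → ℝ} (hq : q ∈ simplex K) (k : Fin K) :
    q k ≤ 1 := by
  have := Finset.single_le_sum (f := q) (fun j _ => hq.1 j) (Finset.mem_univ k)
  rw [hq.2] at this
  exact this

lemma V_step_le {K : ℕ} (hK : 1 ≤ K) (H₁ H₂ : ℕ) (s t : Fin K → ℝ) (c : ℝ)
    (h : ∀ u : Fin K → ℝ, (∀ k, 0 ≤ u k) →
      V K H₁ (fun k => s k + u k) ≤ V K H₂ (fun k => t k + u k) + c)
    (h₁ : ∀ (u : Fin K → ℝ) (c' : ℝ), (∀ k, u k ≤ c') →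
      V K H₁ (fun k => s k + u k) ≤ V K H₁ s + c')
    (h₂ : ∀ (u : Fin K → ℝ) (c' : ℝ), (∀ k, u k ≤ c') →
      V K H₂ (fun k => t k + u k) ≤ V K H₂ t + c')
    (h₁' : ∀ u : Fin K → ℝ, (∀ k, 0 ≤ u k) →
      V K H₁ s ≤ V K H₁ (fun k => s k + u k)) :
    V K (H₁ + 1) s ≤ V K (H₂ + 1) t + c := by
  haveI : Nonempty (Fin K) := Fin.pos_iff_nonempty.mp hK
  have hI : (fun _ : Fin K => (K : ℝ)⁻¹) ∈ simplexInt K := uniform_mem_simplexInt hK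
  have hq0 : (fun _ : Fin K => (K : ℝ)⁻¹) ∈ simplex K := simplexInt_subset hI
  have hSne : (simplex K).Nonempty := ⟨_, hq0⟩
  have hIne : (simplexInt K).Nonempty := ⟨_, hI⟩
  -- division bound
  have key : ∀ r ∈ simplexInt K, ∃ M : ℝ, ∀ q ∈ simplex K, ∀ k, q k / r k ≤ M := by
    intro r hr
    obtain ⟨k0, _, hk0⟩ := Finset.exists_mem_eq_inf' (Finset.univ_nonempty (α := Fin K)) r
    set ε := Finset.univ.inf' Finset.univ_nonempty r with hε
    have hεpos : 0 < ε := hk0 ▸ hr.1 k0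
    refine ⟨1 / ε, fun q hq k => ?_⟩
    have hεle : ε ≤ r k := Finset.inf'_le r (Finset.mem_univ k)
    exact div_le_div₀ zero_le_one (mem_simplex_le_one hq k) hεpos hεle
  have hbdd₁ : ∀ r ∈ simplexInt K,
      BddAbove ((fun q : Fin K → ℝ => V K H₁ (fun k => s k + q k / r k)) '' simplex K) := by
    intro r hr
    obtain ⟨M, hM⟩ := key r hr
    refine ⟨V K H₁ s + M, ?_⟩
    rintro x ⟨q, hq, rfl⟩
    exact h₁ _ _ (fun k => hM q hq k)
  have hbdd₂ : ∀ r ∈ simplexInt K,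
      BddAbove ((fun q : Fin K → ℝ => V K H₂ (fun k => t k + q k / r k)) '' simplex K) := by
    intro r hr
    obtain ⟨M, hM⟩ := key r hr
    refine ⟨V K H₂ t + M, ?_⟩
    rintro x ⟨q, hq, rfl⟩
    exact h₂ _ _ (fun k => hM q hq k)
  have hbddBelow : BddBelow ((fun r : Fin K → ℝ =>
      sSup ((fun q : Fin K → ℝ => V K H₁ (fun k => s k + q k / r k)) '' simplex K))
      '' simplexInt K) := by
    refine ⟨V K H₁ s, ?_⟩
    rintro x ⟨r, hr, rfl⟩
    have h1 : V K H₁ s ≤ V K H₁ (fun k => s k + (K:ℝ)⁻¹ / r k) :=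
      h₁' _ (fun k => div_nonneg (hq0.1 k) (hr.1 k).le)
    exact h1.trans (le_csSup (hbdd₁ r hr) ⟨_, hq0, rfl⟩)
  simp only [V]
  rw [← sub_le_iff_le_add]
  refine le_csInf (hIne.image _) ?_
  rintro b ⟨r, hr, rfl⟩
  rw [sub_le_iff_le_add]
  have step1 : sInf ((fun r : Fin K → ℝ =>
      sSup ((fun q : Fin K → ℝ => V K H₁ (fun k => s k + q k / r k)) '' simplex K))
      '' simplexInt K) ≤
      sSup ((fun q : Fin K → ℝ => V K H₁ (fun k => s k + q k / r k)) '' simplex K) :=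
    csInf_le hbddBelow ⟨r, hr, rfl⟩
  refine step1.trans ?_
  refine csSup_le (hSne.image _) ?_
  rintro x ⟨q, hq, rfl⟩
  have h3 : V K H₁ (fun k => s k + q k / r k) ≤ V K H₂ (fun k => t k + q k / r k) + c :=
    h _ (fun k => div_nonneg (hq.1 k) (hr.1 k).le)
  refine h3.trans (add_le_add_left ?_ c)
  exact le_csSup (hbdd₂ r hr) ⟨q, hq, rfl⟩

lemma V_le_add {K : ℕ} (hK : 1 ≤ K) : ∀ (H : ℕ) (s t : Fin K → ℝ) (c : ℝ),
    (∀ k, s k ≤ t k + c) → V K H s ≤ V K H t + c := by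
  haveI : Nonempty (Fin K) := Fin.pos_iff_nonempty.mp hK
  intro H
  induction H with
  | zero =>
    intro s t c hst
    simp only [V]
    refine ciSup_le fun k => (hst k).trans (add_le_add_left ?_ c)
    exact le_ciSup (Set.Finite.bddAbove (Set.finite_range t)) k
  | succ H ih =>
    intro s t c hst
    refine V_step_le hK H H s t c ?_ ?_ ?_ ?_
    · intro u hu
      exact ih _ _ _ (fun k => by linarith [hst k])
    · intro u c' hu
      exact ih _ _ _ (fun k => by linarith [hu k])
    · intro u c' hu
      exact ih _ _ _ (fun k => by linarith [hu k])
    · intro u hu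
      have := ih s (fun k => s k + u k) 0 (fun k => show s k ≤ s k + u k + 0 by linarith [hu k])
      linarith

lemma V_add_le {K : ℕ} (hK : 1 ≤ K) (A : ℕ) : ∀ (B : ℕ) (s : Fin K → ℝ),
    V K (A + B) s ≤ V K B s + V K A 0 := by
  haveI : Nonempty (Fin K) := Fin.pos_iff_nonempty.mp hK
  intro B
  induction B with
  | zero =>
    intro s
    have h1 : V K A s ≤ V K A 0 + ⨆ k, s k := by
      refine V_le_add hK A s 0 (⨆ k, s k) (fun k => ?_)
      have := le_ciSup (Set.Finite.bddAbove (Set.finite_range s)) k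
      simpa using this
    have h2 : V K 0 s = ⨆ k, s k := rfl
    rw [Nat.add_zero, h2]
    linarith
  | succ B ih =>
    intro s
    show V K ((A + B) + 1) s ≤ V K (B + 1) s + V K A 0
    refine V_step_le hK (A + B) B s s (V K A 0) ?_ ?_ ?_ ?_
    · intro u hu
      exact ih (fun k => s k + u k)
    · intro u c' hu
      exact V_le_add hK _ _ _ _ (fun k => by linarith [hu k])
    · intro u c' hu
      exact V_le_add hK _ _ _ _ (fun k => by linarith [hu k])
    · intro u hu
      have := V_le_add hK (A + B) s (fun k => s k + u k) 0
        (fun k => show s k ≤ s k + u k + 0 by linarith [hu k])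
      linarith

/-- Subadditivity of the optimal bookmaking loss under horizon repetition:
`L*_{mT,K} ≤ m · L*_{T,K}`. -/
theorem optimal_loss_subadditive (K T m : ℕ) (hK : 1 ≤ K) (hT : 1 ≤ T) (hm : 1 ≤ m) :
    V K (m * T) 0 ≤ (m : ℝ) * V K T 0 := by
  induction m, hm using Nat.le_induction with
  | base => simp
  | succ m hm ih =>
    have h1 : (m + 1) * T = T + m * T := by ring
    rw [h1]
    have h2 := V_add_le hK T (m * T) 0
    push_cast
    calc V K (T + m * T) 0 ≤ V K (m * T) 0 + V K T 0 := h2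
      _ ≤ (m : ℝ) * V K T 0 + V K T 0 := by linarith
      _ = ((m : ℝ) + 1) * V K T 0 := by ring
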